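/- Let G be an infinite connected graph with maximal degree Δ_G and let p ∈ [0,1). If for every vertex x the expected size of the open cluster C_x in Bernoulli(p) bond percolation is finite, then for every vertex y and every n ≥ 1, (1-p)^{Δ_G} · ∑_{i=0}^{n} inf_{x} P^x(T_x > i) ≤ E[U_n] ≤ (sup_x E[|C_x|]) · ∑_{i=0}^{n} sup_x P^x(T_x > i), where the expectation on U_n is with respect to the product of the simple random walk started at y and percolation. -/

import Mathlib

open MeasureTheory
open scoped ENNReal

namespace PaperUnion

variable {V : Type*}

/-- The subgraph of `G` consisting of the open edges of the percolation
configuration `ω`. -/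
def openGraph (G : SimpleGraph V) (ω : Sym2 V → Bool) : SimpleGraph V where
  Adj x y := G.Adj x y ∧ ω s(x, y) = true
  symm := by
    constructor
    rintro x y ⟨h1, h2⟩
    exact ⟨h1.symm, by rwa [Sym2.eq_swap]⟩
  loopless := by constructor; rintro x ⟨h, -⟩; exact G.irrefl h

/-- The open cluster of the vertex `x` in the configuration `ω`. -/
def cluster (G : SimpleGraph V) (ω : Sym2 V → Bool) (x : V) : Set V :=
  {y | (openGraph G ω).Reachable x y}

/-- `|C_x|`, the number of vertices of the open cluster of `x`. -/
noncomputable def clusterSize (G : SimpleGraph V) (ω : Sym2 V → Bool) (x : V) : ℝ≥0∞ :=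
  (cluster G ω x).encard

/-- `μ` is Bernoulli(p) bond percolation on `G`: a probability measure under which the
states of distinct edges are independent and each edge is open with probability `p`. -/
def IsBernoulli (G : SimpleGraph V) (p : ℝ≥0∞) (μ : Measure (Sym2 V → Bool)) : Prop :=
  IsProbabilityMeasure μ ∧
    ∀ F : Finset (Sym2 V), (F : Set (Sym2 V)) ⊆ G.edgeSet →
      ∀ b : Sym2 V → Bool,
        μ {ω | ∀ e ∈ F, ω e = b e} = ∏ e ∈ F, (if b e then p else 1 - p)

open Classical in
/-- The probability that the simple random walk started at `x` follows the
finite path `s`. -/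
noncomputable def pathProb (G : SimpleGraph V) [G.LocallyFinite] (x : V) {n : ℕ}
    (s : Fin (n + 1) → V) : ℝ≥0∞ :=
  (if s 0 = x then 1 else 0) *
    ∏ i : Fin n,
      if G.Adj (s i.castSucc) (s i.succ) then ((G.degree (s i.castSucc) : ℝ≥0∞))⁻¹ else 0

/-- `P^x(E)` for an event `E` depending on the first `n+1` positions of the simple
random walk. -/
noncomputable def walkProb (G : SimpleGraph V) [G.LocallyFinite] (x : V) (n : ℕ)
    (E : (Fin (n + 1) → V) → Prop) : ℝ≥0∞ :=
  ∑' s : Fin (n + 1) → V, {t : Fin (n + 1) → V | E t}.indicator (fun t => pathProb G x t) s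

/-- `P^x(T_A > n)`, where `T_A = inf {m ≥ 1 : S_m ∈ A}`. -/
noncomputable def probAvoid (G : SimpleGraph V) [G.LocallyFinite] (x : V) (A : Set V)
    (n : ℕ) : ℝ≥0∞ :=
  walkProb G x n (fun s => ∀ m : Fin (n + 1), 0 < (m : ℕ) → s m ∉ A)

/-- `P^x(T_A = ∞)`. -/
noncomputable def escapeProb (G : SimpleGraph V) [G.LocallyFinite] (x : V) (A : Set V) : ℝ≥0∞ :=
  ⨅ n : ℕ, probAvoid G x A n

/-- `P^x(k < T_A < ∞)`. -/
noncomputable def probHitAfter (G : SimpleGraph V) [G.LocallyFinite] (x : V) (A : Set V)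
    (k : ℕ) : ℝ≥0∞ :=
  probAvoid G x A k - escapeProb G x A

def IsVertexTransitive (G : SimpleGraph V) : Prop :=
  ∀ x y : V, ∃ φ : G ≃g G, φ x = y

def Transient (G : SimpleGraph V) [G.LocallyFinite] : Prop :=
  ∀ x : V, 0 < escapeProb G x {x}

def Recurrent (G : SimpleGraph V) [G.LocallyFinite] : Prop :=
  ∀ x : V, escapeProb G x {x} = 0

/-- The trace `{S_0, …, S_n}` of a finite path. -/
def trace [DecidableEq V] {n : ℕ} (s : Fin (n + 1) → V) : Finset V :=
  Finset.image s Finset.univ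

/-- `R_n`, the number of vertices visited by the path. -/
def rangeSize [DecidableEq V] {n : ℕ} (s : Fin (n + 1) → V) : ℕ :=
  (trace s).card

/-- The inner boundary `∂R_n` of the trace: the visited vertices having a
neighbour outside the trace. -/
def innerBoundary [DecidableEq V] (G : SimpleGraph V) {n : ℕ} (s : Fin (n + 1) → V) : Set V :=
  {x | x ∈ trace s ∧ ∃ y, G.Adj x y ∧ y ∉ trace s}

/-- `L_n = |∂R_n|`. -/
noncomputable def boundarySize [DecidableEq V] (G : SimpleGraph V) {n : ℕ}
    (s : Fin (n + 1) → V) : ℕ :=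
  (innerBoundary G s).ncard

/-- `E^{P^x}[R_n]`. -/
noncomputable def expRange [DecidableEq V] (G : SimpleGraph V) [G.LocallyFinite] (x : V)
    (n : ℕ) : ℝ≥0∞ :=
  ∑' s : Fin (n + 1) → V, pathProb G x s * (rangeSize s : ℝ≥0∞)

/-- `E^{P^x}[L_n]`. -/
noncomputable def expBoundary [DecidableEq V] (G : SimpleGraph V) [G.LocallyFinite] (x : V)
    (n : ℕ) : ℝ≥0∞ :=
  ∑' s : Fin (n + 1) → V, pathProb G x s * (boundarySize G s : ℝ≥0∞)

/-- `E[U_n]` where `U_n = |⋃_{i ≤ n} C_{S_i}|`, the expectation being taken with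
respect to the product of the walk measure started at `x` and the percolation
measure `μ`. -/
noncomputable def expUnion (G : SimpleGraph V) [G.LocallyFinite]
    (μ : Measure (Sym2 V → Bool)) (x : V) (n : ℕ) : ℝ≥0∞ :=
  ∑' s : Fin (n + 1) → V, pathProb G x s * ∫⁻ ω, (⋃ i, cluster G ω (s i)).encard ∂μ

/-- `c_p = E[|C_o| ⬝ P^o(T_{C_o} = ∞)]`. -/
noncomputable def cP (G : SimpleGraph V) [G.LocallyFinite] (μ : Measure (Sym2 V → Bool))
    (o : V) : ℝ≥0∞ :=
  ∫⁻ ω, clusterSize G ω o * escapeProb G o (cluster G ω o) ∂μ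


section Aux

variable {V : Type*}

open Classical in
/-- One-step transition kernel of the simple random walk. -/
noncomputable def trans (G : SimpleGraph V) [G.LocallyFinite] (x v : V) : ℝ≥0∞ :=
  if G.Adj x v then ((G.degree x : ℝ≥0∞))⁻¹ else 0

open Classical in
lemma pathProb_def (G : SimpleGraph V) [G.LocallyFinite] (x : V) {n : ℕ} (s : Fin (n + 1) → V) :
    pathProb G x s =
      (if s 0 = x then 1 else 0) * ∏ i : Fin n, trans G (s i.castSucc) (s i.succ) := rfl

open Classical in
lemma pathProb_eq_zero (G : SimpleGraph V) [G.LocallyFinite] {x : V} {n : ℕ}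
    {s : Fin (n + 1) → V} (h : s 0 ≠ x) : pathProb G x s = 0 := by
  rw [pathProb_def, if_neg h, zero_mul]

open Classical in
lemma pathProb_fin_one (G : SimpleGraph V) [G.LocallyFinite] (x v : V) :
    pathProb G x (fun _ : Fin 1 => v) = if v = x then 1 else 0 := by
  rw [pathProb_def]
  simp

lemma pathProb_snoc (G : SimpleGraph V) [G.LocallyFinite] (x : V) {n : ℕ}
    (s : Fin (n + 1) → V) (v : V) :
    pathProb G x (Fin.snoc s v) = pathProb G x s * trans G (s (Fin.last n)) v := by
  rw [pathProb_def, pathProb_def, Fin.prod_univ_castSucc]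
  have h0 : (Fin.snoc s v : Fin (n + 2) → V) 0 = s 0 := by
    have h : (0 : Fin (n + 2)) = Fin.castSucc 0 := rfl
    rw [h, Fin.snoc_castSucc]
  rw [h0]
  simp only [Fin.succ_castSucc, Fin.snoc_castSucc, Fin.succ_last, Fin.snoc_last]
  ring

lemma tsum_trans (G : SimpleGraph V) [G.LocallyFinite] {x : V} (hx : 0 < G.degree x) :
    ∑' v : V, trans G x v = 1 := by
  classical
  rw [tsum_eq_sum (s := G.neighborFinset x) (fun v hv => by
    rw [trans, if_neg]
    rw [SimpleGraph.mem_neighborFinset] at hv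
    exact hv)]
  have : ∀ v ∈ G.neighborFinset x, trans G x v = ((G.degree x : ℝ≥0∞))⁻¹ := by
    intro v hv
    rw [SimpleGraph.mem_neighborFinset] at hv
    rw [trans, if_pos hv]
  rw [Finset.sum_congr rfl this, Finset.sum_const, SimpleGraph.card_neighborFinset_eq_degree,
    nsmul_eq_mul]
  exact ENNReal.mul_inv_cancel (by exact_mod_cast hx.ne') (ENNReal.natCast_ne_top _)

lemma degree_pos (G : SimpleGraph V) [G.LocallyFinite] (hV : Infinite V)
    (hconn : G.Connected) (x : V) : 0 < G.degree x := by
  rw [SimpleGraph.degree_pos_iff_exists_adj]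
  obtain ⟨y, hy⟩ := exists_ne x
  obtain ⟨w⟩ := hconn.preconnected x y
  cases w with
  | nil => exact absurd rfl hy.symm
  | cons h p => exact ⟨_, h⟩

/-- Splitting off the last vertex of a path. -/
def snocEquiv (W : Type*) (n : ℕ) : ((Fin (n + 1) → W) × W) ≃ (Fin (n + 2) → W) where
  toFun p := Fin.snoc p.1 p.2
  invFun s := (Fin.init s, s (Fin.last (n + 1)))
  left_inv p := by simp
  right_inv s := by simp

lemma tsum_snoc {n : ℕ} (g : (Fin (n + 2) → V) → ℝ≥0∞) :
    ∑' s : Fin (n + 2) → V, g s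
      = ∑' (s' : Fin (n + 1) → V), ∑' v : V, g (Fin.snoc s' v) := by
  rw [← Equiv.tsum_eq (snocEquiv V n) g, ENNReal.tsum_prod']
  rfl

lemma tsum_pathProb (G : SimpleGraph V) [G.LocallyFinite] (hdeg : ∀ x, 0 < G.degree x)
    (y : V) : ∀ n : ℕ, ∑' s : Fin (n + 1) → V, pathProb G y s = 1 := by
  intro n
  induction n with
  | zero =>
    rw [← Equiv.tsum_eq (Equiv.funUnique (Fin 1) V).symm (fun s => pathProb G y s)]
    have h : ∀ v : V, pathProb G y ((Equiv.funUnique (Fin 1) V).symm v)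
        = pathProb G y (fun _ : Fin 1 => v) := fun v => rfl
    rw [tsum_congr fun v => by rw [h, pathProb_fin_one]]
    rw [tsum_eq_single y (fun v hv => by rw [if_neg hv])]
    rw [if_pos rfl]
  | succ n ih =>
    rw [tsum_snoc]
    have h : ∀ s' : Fin (n + 1) → V, ∑' v : V, pathProb G y (Fin.snoc s' v)
        = pathProb G y s' := by
      intro s'
      simp only [pathProb_snoc]
      rw [ENNReal.tsum_mul_left, tsum_trans G (hdeg _), mul_one]
    rw [tsum_congr h, ih]

/-- The tail of a path, starting at time `i`. -/
def tailMap (i m : ℕ) (s : Fin (i + m + 1) → V) : Fin (m + 1) → V :=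
  fun j => s ⟨i + (j : ℕ), by have := j.isLt; omega⟩

lemma snoc_mk_lt {N : ℕ} (s : Fin (N + 1) → V) (v : V) (k : ℕ) (h : k < N + 1)
    (h2 : k < N + 2) : (Fin.snoc s v : Fin (N + 2) → V) ⟨k, h2⟩ = s ⟨k, h⟩ := by
  have he : (⟨k, h2⟩ : Fin (N + 2)) = Fin.castSucc ⟨k, h⟩ := by ext; simp
  rw [he, Fin.snoc_castSucc]

lemma snoc_mk_ge {N : ℕ} (s : Fin (N + 1) → V) (v : V) (k : ℕ) (hk : ¬ k < N + 1)
    (h2 : k < N + 2) : (Fin.snoc s v : Fin (N + 2) → V) ⟨k, h2⟩ = v := by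
  have he : (⟨k, h2⟩ : Fin (N + 2)) = Fin.last (N + 1) := by
    ext; simp only [Fin.val_last]; omega
  rw [he, Fin.snoc_last]

lemma tailMap_snoc (i m : ℕ) (s' : Fin (i + m + 1) → V) (v : V) :
    tailMap i (m + 1) (Fin.snoc s' v) = Fin.snoc (tailMap i m s') v := by
  funext j
  obtain ⟨jv, hjv⟩ := j
  simp only [tailMap]
  by_cases hj : jv < m + 1
  · rw [snoc_mk_lt s' v (i + jv) (by omega), snoc_mk_lt (tailMap i m s') v jv hj]
    rfl
  · rw [snoc_mk_ge s' v (i + jv) (by omega), snoc_mk_ge (tailMap i m s') v jv hj]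

lemma tailMap_last (i m : ℕ) (s : Fin (i + m + 1) → V) :
    tailMap i m s (Fin.last m) = s (Fin.last (i + m)) := by
  simp only [tailMap]
  exact congrArg s (Fin.ext (by simp))

lemma tailMap_zero_apply (i m : ℕ) (s : Fin (i + m + 1) → V) :
    tailMap i m s 0 = s ⟨i, by omega⟩ := by
  simp only [tailMap]
  exact congrArg s (Fin.ext (by simp))

lemma split (G : SimpleGraph V) [G.LocallyFinite] (y : V) (i : ℕ) :
    ∀ (m : ℕ) (F : (Fin (m + 1) → V) → ℝ≥0∞),
    ∑' s : Fin (i + m + 1) → V, pathProb G y s * F (tailMap i m s)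
      = ∑' a : Fin (i + 1) → V, pathProb G y a *
          ∑' b : Fin (m + 1) → V, pathProb G (a (Fin.last i)) b * F b := by
  intro m
  induction m with
  | zero =>
    intro F
    have htail : ∀ s : Fin (i + 0 + 1) → V, tailMap i 0 s = fun _ : Fin 1 => s (Fin.last i) := by
      intro s
      funext j
      have hj := j.isLt
      simp only [tailMap]
      congr 1
      ext
      simp only [Fin.val_last]
      omega
    have hinner : ∀ x : V, ∑' b : Fin 1 → V, pathProb G x b * F b = F (fun _ => x) := by
      intro x
      rw [← Equiv.tsum_eq (Equiv.funUnique (Fin 1) V).symm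
        (fun b => pathProb G x b * F b)]
      have h : ∀ v : V, pathProb G x ((Equiv.funUnique (Fin 1) V).symm v) *
          F ((Equiv.funUnique (Fin 1) V).symm v)
          = pathProb G x (fun _ : Fin 1 => v) * F (fun _ => v) := fun v => rfl
      rw [tsum_congr h, tsum_eq_single x
        (fun v hv => by rw [pathProb_eq_zero G (show (fun _ : Fin 1 => v) 0 ≠ x from hv), zero_mul]),
        pathProb_fin_one, if_pos rfl, one_mul]
    calc ∑' s : Fin (i + 0 + 1) → V, pathProb G y s * F (tailMap i 0 s)
        = ∑' s : Fin (i + 1) → V, pathProb G y s * F (fun _ => s (Fin.last i)) :=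
          tsum_congr fun s => by rw [htail s]
      _ = _ := tsum_congr fun a => by rw [hinner (a (Fin.last i))]
  | succ m ih =>
    intro F
    have hlhs : ∑' s : Fin (i + m + 1 + 1) → V, pathProb G y s * F (tailMap i (m + 1) s)
        = ∑' s' : Fin (i + m + 1) → V, pathProb G y s' *
            (∑' v : V, trans G (tailMap i m s' (Fin.last m)) v * F (Fin.snoc (tailMap i m s') v)) := by
      rw [tsum_snoc (n := i + m) (fun s => pathProb G y s * F (tailMap i (m + 1) s))]
      refine tsum_congr fun s' => ?_
      rw [← ENNReal.tsum_mul_left]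
      refine tsum_congr fun v => ?_
      rw [pathProb_snoc, tailMap_snoc, tailMap_last, mul_assoc]
    have hrhs : ∀ x : V, ∑' b : Fin (m + 1 + 1) → V, pathProb G x b * F b
        = ∑' b : Fin (m + 1) → V, pathProb G x b *
            (∑' v : V, trans G (b (Fin.last m)) v * F (Fin.snoc b v)) := by
      intro x
      rw [tsum_snoc (n := m) (fun b => pathProb G x b * F b)]
      refine tsum_congr fun b => ?_
      rw [← ENNReal.tsum_mul_left]
      refine tsum_congr fun v => ?_
      rw [pathProb_snoc, mul_assoc]
    refine hlhs.trans ?_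
    rw [ih (fun b => ∑' v : V, trans G (b (Fin.last m)) v * F (Fin.snoc b v))]
    exact tsum_congr fun a => by rw [hrhs (a (Fin.last i))]

open Classical in
/-- `ℝ≥0∞`-valued indicator of a proposition. -/
noncomputable def pind (P : Prop) : ℝ≥0∞ := if P then 1 else 0

lemma pind_pos {P : Prop} (h : P) : pind P = 1 := if_pos h

lemma pind_neg {P : Prop} (h : ¬P) : pind P = 0 := if_neg h

lemma pind_congr {P Q : Prop} (h : P ↔ Q) : pind P = pind Q :=
  congrArg pind (propext h)

end Aux

section Aux2

variable {V : Type*}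

open Classical in
lemma inner_probAvoid (G : SimpleGraph V) [G.LocallyFinite] (x : V) (m : ℕ) :
    ∑' b : Fin (m + 1) → V, pathProb G x b *
        pind (∀ j' : Fin (m + 1), 0 < (j' : ℕ) → b j' ≠ b 0)
      = probAvoid G x {x} m := by
  rw [probAvoid, walkProb]
  refine tsum_congr fun b => ?_
  rw [Set.indicator_apply]
  by_cases hb : b 0 = x
  · have hiff : (b ∈ {t : Fin (m + 1) → V | ∀ j : Fin (m + 1), 0 < (j : ℕ) → t j ∉ ({x} : Set V)})
        ↔ (∀ j' : Fin (m + 1), 0 < (j' : ℕ) → b j' ≠ b 0) := by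
      simp only [Set.mem_setOf_eq, Set.mem_singleton_iff, hb]
    by_cases h2 : ∀ j' : Fin (m + 1), 0 < (j' : ℕ) → b j' ≠ b 0
    · rw [pind_pos h2, mul_one, if_pos (hiff.mpr h2)]
    · rw [pind_neg h2, mul_zero, if_neg (fun hmem => h2 (hiff.mp hmem))]
  · rw [pathProb_eq_zero G hb, zero_mul, ite_self]

open Classical in
lemma key_eq (G : SimpleGraph V) [G.LocallyFinite] (y : V) (n i : ℕ) (hi : i ≤ n) :
    ∑' s : Fin (n + 1) → V, pathProb G y s *
        pind (∀ j : Fin (n + 1), i < (j : ℕ) → s j ≠ s ⟨i, by omega⟩)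
      = ∑' a : Fin (i + 1) → V, pathProb G y a *
          probAvoid G (a (Fin.last i)) {a (Fin.last i)} (n - i) := by
  obtain ⟨m, rfl⟩ : ∃ m, n = i + m := ⟨n - i, by omega⟩
  rw [show i + m - i = m from by omega]
  have hcond : ∀ s : Fin (i + m + 1) → V,
      (∀ j : Fin (i + m + 1), i < (j : ℕ) → s j ≠ s ⟨i, by omega⟩)
        ↔ (∀ j' : Fin (m + 1), 0 < (j' : ℕ) → tailMap i m s j' ≠ tailMap i m s 0) := by
    intro s
    rw [tailMap_zero_apply]
    constructor
    · intro h j' hj'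
      have hj := j'.isLt
      simp only [tailMap]
      exact h ⟨i + (j' : ℕ), by omega⟩ (by show i < i + (j' : ℕ); omega)
    · intro h j hj hne
      have hj2 := j.isLt
      refine h ⟨(j : ℕ) - i, by omega⟩ (by simp; omega) ?_
      simp only [tailMap]
      have he : (⟨i + ((j : ℕ) - i), by omega⟩ : Fin (i + m + 1)) = j := by
        ext
        simp
        omega
      rw [he]
      exact hne
  calc ∑' s : Fin (i + m + 1) → V, pathProb G y s *
        pind (∀ j : Fin (i + m + 1), i < (j : ℕ) → s j ≠ s ⟨i, by omega⟩)
      = ∑' s : Fin (i + m + 1) → V, pathProb G y s *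
        pind (∀ j' : Fin (m + 1), 0 < (j' : ℕ) → tailMap i m s j' ≠ tailMap i m s 0) := by
        refine tsum_congr fun s => ?_
        rw [pind_congr (hcond s)]
    _ = ∑' a : Fin (i + 1) → V, pathProb G y a *
          ∑' b : Fin (m + 1) → V, pathProb G (a (Fin.last i)) b *
            pind (∀ j' : Fin (m + 1), 0 < (j' : ℕ) → b j' ≠ b 0) :=
        split G y i m (fun b => pind (∀ j' : Fin (m + 1), 0 < (j' : ℕ) → b j' ≠ b 0))
    _ = _ := tsum_congr fun a => by rw [inner_probAvoid]

end Aux2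

section Aux3

variable {V : Type*}

/-- `ℝ≥0∞`-valued cardinality as a sum of indicators. -/
noncomputable def ecard (A : Set V) : ℝ≥0∞ := ∑' y : V, A.indicator (fun _ => 1) y

lemma ecard_eq (A : Set V) : (A.encard : ℝ≥0∞) = ecard A := by
  rw [ecard, ← tsum_subtype A (fun _ => (1 : ℝ≥0∞))]
  by_cases hA : A.Finite
  · have := hA.fintype
    rw [tsum_fintype, Finset.sum_const, Finset.card_univ, nsmul_eq_mul, mul_one,
      hA.encard_eq_coe_toFinset_card, Set.Finite.card_toFinset]
    simp
    rw [← hA.cast_ncard_eq, ENat.toENNReal_coe]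
  · have : Infinite A := Set.infinite_coe_iff.mpr hA
    rw [Set.Infinite.encard_eq hA, ENNReal.tsum_const_eq_top_of_ne_zero one_ne_zero]
    simp
lemma ecard_singleton (x : V) : ecard ({x} : Set V) = 1 := by
  rw [← ecard_eq, Set.encard_singleton]
  simp

lemma ecard_mono {A B : Set V} (h : A ⊆ B) : ecard A ≤ ecard B :=
  Summable.tsum_le_tsum (fun y => Set.indicator_le_indicator_of_subset h (fun _ => zero_le) y)
    ENNReal.summable ENNReal.summable

lemma ecard_biUnion_le {ι : Type*} (T : Finset ι) (C : ι → Set V) :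
    ecard (⋃ i ∈ T, C i) ≤ ∑ i ∈ T, ecard (C i) := by
  classical
  simp only [ecard]
  rw [← Summable.tsum_finsetSum (fun i _ => ENNReal.summable)]
  refine Summable.tsum_le_tsum (fun y => ?_) ENNReal.summable ENNReal.summable
  rw [Set.indicator_apply]
  by_cases hy : y ∈ ⋃ i ∈ T, C i
  · rw [if_pos hy]
    obtain ⟨i, hiT, hyi⟩ := Set.mem_iUnion₂.mp hy
    calc (1 : ℝ≥0∞) = (C i).indicator (fun _ => 1) y := by rw [Set.indicator_of_mem hyi]
      _ ≤ ∑ i ∈ T, (C i).indicator (fun _ => 1) y :=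
          Finset.single_le_sum (f := fun i => (C i).indicator (fun _ => (1 : ℝ≥0∞)) y)
            (fun _ _ => zero_le) hiT
  · rw [if_neg hy]
    exact zero_le

lemma mem_cluster_self (G : SimpleGraph V) (ω : Sym2 V → Bool) (x : V) :
    x ∈ cluster G ω x := SimpleGraph.Reachable.refl x

lemma mem_cluster_iff {G : SimpleGraph V} {ω : Sym2 V → Bool} {x z : V} :
    z ∈ cluster G ω x ↔ (openGraph G ω).Reachable x z := Iff.rfl

/-- Two distinct "last exit" clusters are disjoint. -/
lemma lastexit_unique {G : SimpleGraph V} {ω : Sym2 V → Bool} {n : ℕ}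
    {s : Fin (n + 1) → V} {i j : Fin (n + 1)}
    (hi : ∀ k : Fin (n + 1), (i : ℕ) < (k : ℕ) → s k ∉ cluster G ω (s i))
    (hj : ∀ k : Fin (n + 1), (j : ℕ) < (k : ℕ) → s k ∉ cluster G ω (s j))
    (hne : i ≠ j) {y : V} (hyi : y ∈ cluster G ω (s i)) (hyj : y ∈ cluster G ω (s j)) :
    False := by
  rw [mem_cluster_iff] at hyi hyj
  have hR : (openGraph G ω).Reachable (s i) (s j) := hyi.trans hyj.symm
  have hvne : (i : ℕ) ≠ (j : ℕ) := fun h => hne (Fin.ext h)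
  rcases Nat.lt_or_ge (i : ℕ) (j : ℕ) with hlt | hge
  · exact hi j hlt hR
  · exact hj i (by omega) hR.symm

/-- Finset of edges incident to `x`. -/
def edgesAt (G : SimpleGraph V) [G.LocallyFinite] [DecidableEq V] (x : V) :
    Finset (Sym2 V) := (G.neighborFinset x).image fun z => s(x, z)

lemma edgesAt_card (G : SimpleGraph V) [G.LocallyFinite] [DecidableEq V] (x : V) :
    (edgesAt G x).card = G.degree x := by
  rw [edgesAt, Finset.card_image_of_injOn (fun a _ b _ h => Sym2.congr_right.mp h),
    SimpleGraph.card_neighborFinset_eq_degree]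

lemma edgesAt_subset (G : SimpleGraph V) [G.LocallyFinite] [DecidableEq V] (x : V) :
    ((edgesAt G x : Finset (Sym2 V)) : Set (Sym2 V)) ⊆ G.edgeSet := by
  intro e he
  simp only [edgesAt, Finset.coe_image, Set.mem_image, Finset.mem_coe,
    SimpleGraph.mem_neighborFinset] at he
  obtain ⟨z, hz, rfl⟩ := he
  exact (SimpleGraph.mem_edgeSet G).mpr hz

lemma mem_edgesAt (G : SimpleGraph V) [G.LocallyFinite] [DecidableEq V] {x z : V}
    (h : G.Adj x z) : s(x, z) ∈ edgesAt G x :=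
  Finset.mem_image.mpr ⟨z, (SimpleGraph.mem_neighborFinset G x z).mpr h, rfl⟩

/-- The event that all edges at `x` are closed. -/
def closedAt (G : SimpleGraph V) [G.LocallyFinite] [DecidableEq V] (x : V) :
    Set (Sym2 V → Bool) := {ω | ∀ e ∈ edgesAt G x, ω e = false}

lemma closedAt_measurable (G : SimpleGraph V) [G.LocallyFinite] [DecidableEq V] (x : V) :
    MeasurableSet (closedAt G x) := by
  have he : closedAt G x = ⋂ e ∈ (edgesAt G x : Finset (Sym2 V)),
      (fun ω : Sym2 V → Bool => ω e) ⁻¹' {false} := by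
    ext ω
    simp [closedAt]
  rw [he]
  exact MeasurableSet.biInter ((edgesAt G x).countable_toSet)
    (fun e _ => (measurable_pi_apply e) (measurableSet_singleton false))

lemma closedAt_prob (G : SimpleGraph V) [G.LocallyFinite] [DecidableEq V]
    {p : ℝ≥0∞} {μ : Measure (Sym2 V → Bool)} (hμ : IsBernoulli G p μ) (x : V) :
    μ (closedAt G x) = (1 - p) ^ (G.degree x) := by
  have h := hμ.2 (edgesAt G x) (edgesAt_subset G x) (fun _ => false)
  have he : closedAt G x = {ω : Sym2 V → Bool | ∀ e ∈ edgesAt G x, ω e = (fun _ => false) e} := rfl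
  rw [he, h]
  simp [Finset.prod_const, edgesAt_card]

lemma cluster_of_closedAt {G : SimpleGraph V} [G.LocallyFinite] [DecidableEq V]
    {x : V} {ω : Sym2 V → Bool} (hω : ω ∈ closedAt G x) : cluster G ω x = {x} := by
  ext z
  simp only [mem_cluster_iff, Set.mem_singleton_iff]
  constructor
  · intro h
    obtain ⟨w⟩ := h
    cases w with
    | nil => rfl
    | cons h' p =>
      have hfalse := hω _ (mem_edgesAt G h'.1)
      rw [h'.2] at hfalse
      exact absurd hfalse (by simp)
  · rintro rfl
    exact SimpleGraph.Reachable.refl _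

/-- Connected locally finite graphs are countable. -/
def ballFinset (G : SimpleGraph V) [G.LocallyFinite] [DecidableEq V] (y0 : V) : ℕ → Finset V
  | 0 => {y0}
  | n + 1 => ballFinset G y0 n ∪ (ballFinset G y0 n).biUnion (fun z => G.neighborFinset z)

lemma countable_of_connected (G : SimpleGraph V) [G.LocallyFinite] [DecidableEq V]
    (hconn : G.Connected) : Countable V := by
  obtain ⟨y0⟩ := hconn.nonempty
  have hB : ∀ {x y : V} (w : G.Walk x y), x ∈ ballFinset G y w.length := by
    intro x y w
    induction w with
    | nil => simp [ballFinset]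
    | @cons u v _ h p ih =>
      rw [SimpleGraph.Walk.length_cons]
      show _ ∈ ballFinset G _ (p.length + 1)
      rw [ballFinset]
      refine Finset.mem_union_right _ (Finset.mem_biUnion.mpr ⟨v, ih, ?_⟩)
      exact (SimpleGraph.mem_neighborFinset G v u).mpr h.symm
  have hcu : (Set.univ : Set V).Countable := by
    refine Set.Countable.mono (fun x _ => ?_)
      (Set.countable_iUnion fun n => (ballFinset G y0 n).countable_toSet)
    obtain ⟨w⟩ := hconn.preconnected x y0
    exact Set.mem_iUnion.mpr ⟨w.length, hB w⟩
  exact Set.countable_univ_iff.mp hcu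

lemma measurableSet_reachable (G : SimpleGraph V) [Countable V] (x z : V) :
    MeasurableSet {ω : Sym2 V → Bool | (openGraph G ω).Reachable x z} := by
  classical
  have heq : {ω : Sym2 V → Bool | (openGraph G ω).Reachable x z} =
      ⋃ (n : ℕ) (s : Fin (n + 1) → V),
        ({ω : Sym2 V → Bool | s 0 = x ∧ s (Fin.last n) = z ∧
            ∀ i : Fin n, G.Adj (s i.castSucc) (s i.succ)} ∩
          ⋂ i : Fin n, (fun ω : Sym2 V → Bool => ω s(s i.castSucc, s i.succ)) ⁻¹' {true}) := by
    ext ω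
    simp only [Set.mem_setOf_eq, Set.mem_iUnion, Set.mem_inter_iff, Set.mem_iInter,
      Set.mem_preimage, Set.mem_singleton_iff]
    constructor
    · intro h
      obtain ⟨w⟩ := h
      refine ⟨w.length, fun j => w.getVert (j : ℕ), ⟨w.getVert_zero, ?_, fun i => ?_⟩, fun i => ?_⟩
      · simp [Fin.val_last, w.getVert_length]
      · have := w.adj_getVert_succ i.isLt
        simpa [Fin.coe_castSucc, Fin.val_succ] using this.1
      · have := w.adj_getVert_succ i.isLt
        simpa [Fin.coe_castSucc, Fin.val_succ] using this.2
    · rintro ⟨n, s, ⟨h0, hl, hadj⟩, hopen⟩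
      have chain : ∀ k : ℕ, ∀ hk : k < n + 1, (openGraph G ω).Reachable x (s ⟨k, hk⟩) := by
        intro k
        induction k with
        | zero =>
          intro hk
          have : (⟨0, hk⟩ : Fin (n + 1)) = 0 := rfl
          rw [this, h0]
        | succ k ihk =>
          intro hk
          have hk' : k < n + 1 := by omega
          have hkn : k < n := by omega
          refine (ihk hk').trans (SimpleGraph.Adj.reachable ?_)
          have hadjk := hadj ⟨k, hkn⟩
          have hopenk := hopen ⟨k, hkn⟩
          have e1 : (⟨k, hkn⟩ : Fin n).castSucc = ⟨k, hk'⟩ := by ext; simp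
          have e2 : (⟨k, hkn⟩ : Fin n).succ = ⟨k + 1, hk⟩ := by ext; simp
          rw [e1, e2] at hadjk hopenk
          exact ⟨hadjk, hopenk⟩
      have := chain n (by omega)
      have hlast : (⟨n, by omega⟩ : Fin (n + 1)) = Fin.last n := rfl
      rw [hlast, hl] at this
      exact this
  rw [heq]
  refine MeasurableSet.iUnion fun n => MeasurableSet.iUnion fun s => ?_
  exact (MeasurableSet.const _).inter
    (MeasurableSet.iInter fun i => (measurable_pi_apply _) (measurableSet_singleton true))

lemma measurable_ecard_cluster (G : SimpleGraph V) [Countable V] (x : V) :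
    Measurable fun ω : Sym2 V → Bool => ecard (cluster G ω x) := by
  have he : (fun ω : Sym2 V → Bool => ecard (cluster G ω x)) =
      fun ω => ∑' z : V, {ω' : Sym2 V → Bool | (openGraph G ω').Reachable x z}.indicator
        (fun _ => (1 : ℝ≥0∞)) ω := by
    funext ω
    rw [ecard]
    exact tsum_congr fun z => rfl
  rw [he]
  exact Measurable.ennreal_tsum fun z =>
    measurable_const.indicator (measurableSet_reachable G x z)

end Aux3

section Aux4

variable {V : Type*}

open Classical in
lemma union_subset_lastExit (G : SimpleGraph V) (ω : Sym2 V → Bool) {n : ℕ}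
    (s : Fin (n + 1) → V) :
    (⋃ i, cluster G ω (s i)) ⊆
      ⋃ i ∈ Finset.univ.filter
          (fun i : Fin (n + 1) => ∀ j : Fin (n + 1), (i : ℕ) < (j : ℕ) → s j ≠ s i),
        cluster G ω (s i) := by
  intro z hz
  obtain ⟨i, hzi⟩ := Set.mem_iUnion.mp hz
  classical
  set T := Finset.univ.filter (fun j : Fin (n + 1) => s j = s i) with hT
  have hTne : T.Nonempty := ⟨i, by simp [hT]⟩
  have hjm_mem := T.max'_mem hTne
  have hjm : s (T.max' hTne) = s i := (Finset.mem_filter.mp hjm_mem).2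
  refine Set.mem_iUnion₂.mpr ⟨T.max' hTne, ?_, ?_⟩
  · simp only [Finset.mem_filter, Finset.mem_univ, true_and]
    intro j hj heq
    have hjT : j ∈ T := by simp [hT, heq.trans hjm]
    have hle := Finset.le_max' T j hjT
    rw [Fin.le_def] at hle
    omega
  · rw [show cluster G ω (s (T.max' hTne)) = cluster G ω (s i) from by rw [hjm]]
    exact hzi

open Classical in
lemma ecard_union_le (G : SimpleGraph V) (ω : Sym2 V → Bool) {n : ℕ}
    (s : Fin (n + 1) → V) :
    ecard (⋃ i, cluster G ω (s i)) ≤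
      ∑ i : Fin (n + 1), (if (∀ j : Fin (n + 1), (i : ℕ) < (j : ℕ) → s j ≠ s i)
        then ecard (cluster G ω (s i)) else 0) := by
  classical
  calc ecard (⋃ i, cluster G ω (s i))
      ≤ ecard (⋃ i ∈ Finset.univ.filter
          (fun i : Fin (n + 1) => ∀ j : Fin (n + 1), (i : ℕ) < (j : ℕ) → s j ≠ s i),
          cluster G ω (s i)) := ecard_mono (union_subset_lastExit G ω s)
    _ ≤ ∑ i ∈ Finset.univ.filter
          (fun i : Fin (n + 1) => ∀ j : Fin (n + 1), (i : ℕ) < (j : ℕ) → s j ≠ s i),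
          ecard (cluster G ω (s i)) := ecard_biUnion_le _ _
    _ = _ := Finset.sum_filter _ _

open Classical in
lemma sum_lastexit_le (G : SimpleGraph V) (ω : Sym2 V → Bool) {n : ℕ}
    (s : Fin (n + 1) → V) :
    ∑ i : Fin (n + 1), (if (∀ j : Fin (n + 1), (i : ℕ) < (j : ℕ) → s j ∉ cluster G ω (s i))
        then ecard (cluster G ω (s i)) else 0)
      ≤ ecard (⋃ i, cluster G ω (s i)) := by
  classical
  set D : Fin (n + 1) → Set V := fun i =>
    if (∀ j : Fin (n + 1), (i : ℕ) < (j : ℕ) → s j ∉ cluster G ω (s i))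
      then cluster G ω (s i) else ∅ with hD
  have hrw : ∀ i : Fin (n + 1),
      (if (∀ j : Fin (n + 1), (i : ℕ) < (j : ℕ) → s j ∉ cluster G ω (s i))
        then ecard (cluster G ω (s i)) else 0)
      = ∑' y : V, (D i).indicator (fun _ => (1 : ℝ≥0∞)) y := by
    intro i
    have hDi : D i = if (∀ j : Fin (n + 1), (i : ℕ) < (j : ℕ) → s j ∉ cluster G ω (s i))
        then cluster G ω (s i) else ∅ := by rw [hD]
    by_cases hc : ∀ j : Fin (n + 1), (i : ℕ) < (j : ℕ) → s j ∉ cluster G ω (s i)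
    · rw [if_pos hc, hDi, if_pos hc]
      rfl
    · rw [if_neg hc, hDi, if_neg hc]
      simp
  have hcond : ∀ i : Fin (n + 1), ∀ y, y ∈ D i →
      (∀ j : Fin (n + 1), (i : ℕ) < (j : ℕ) → s j ∉ cluster G ω (s i)) ∧
        y ∈ cluster G ω (s i) := by
    intro i y hyi
    by_cases hc : ∀ j : Fin (n + 1), (i : ℕ) < (j : ℕ) → s j ∉ cluster G ω (s i)
    · refine ⟨hc, ?_⟩
      rw [hD] at hyi
      simp only at hyi
      rwa [if_pos hc] at hyi
    · rw [hD] at hyi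
      simp only at hyi
      rw [if_neg hc] at hyi
      exact absurd hyi (Set.notMem_empty y)
  rw [Finset.sum_congr rfl (fun i _ => hrw i), ← Summable.tsum_finsetSum (fun i _ => ENNReal.summable)]
  simp only [ecard]
  refine Summable.tsum_le_tsum (fun y => ?_) ENNReal.summable ENNReal.summable
  by_cases hy : ∃ i, y ∈ D i
  · obtain ⟨i0, hyi0⟩ := hy
    have huniq : ∀ j, j ≠ i0 → (D j).indicator (fun _ => (1 : ℝ≥0∞)) y = 0 := by
      intro j hj
      rw [Set.indicator_apply, if_neg]
      intro hyj
      obtain ⟨hcj, hyj'⟩ := hcond j y hyj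
      obtain ⟨hci, hyi'⟩ := hcond i0 y hyi0
      exact lastexit_unique hci hcj (Ne.symm hj) hyi' hyj'
    rw [Finset.sum_eq_single i0 (fun j _ hj => huniq j hj)
      (fun h => absurd (Finset.mem_univ i0) h)]
    have hyU : y ∈ ⋃ i, cluster G ω (s i) :=
      Set.mem_iUnion.mpr ⟨i0, (hcond i0 y hyi0).2⟩
    rw [Set.indicator_of_mem hyU, Set.indicator_apply]
    split <;> simp
  · push_neg at hy
    rw [Finset.sum_eq_zero (fun j _ => by rw [Set.indicator_of_notMem (hy j)])]
    exact zero_le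

open Classical in
lemma integral_upper (G : SimpleGraph V) [G.LocallyFinite] [Countable V]
    (μ : Measure (Sym2 V → Bool)) {n : ℕ} (s : Fin (n + 1) → V) :
    ∫⁻ ω, ecard (⋃ i, cluster G ω (s i)) ∂μ ≤
      ∑ i : Fin (n + 1), pind (∀ j : Fin (n + 1), (i : ℕ) < (j : ℕ) → s j ≠ s i) *
        (⨆ x : V, ∫⁻ ω, ecard (cluster G ω x) ∂μ) := by
  classical
  calc ∫⁻ ω, ecard (⋃ i, cluster G ω (s i)) ∂μ
      ≤ ∫⁻ ω, ∑ i : Fin (n + 1), (if (∀ j : Fin (n + 1), (i : ℕ) < (j : ℕ) → s j ≠ s i)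
          then ecard (cluster G ω (s i)) else 0) ∂μ :=
        lintegral_mono fun ω => ecard_union_le G ω s
    _ = ∑ i : Fin (n + 1), ∫⁻ ω, (if (∀ j : Fin (n + 1), (i : ℕ) < (j : ℕ) → s j ≠ s i)
          then ecard (cluster G ω (s i)) else 0) ∂μ :=
        lintegral_finset_sum _ (fun i _ => by
          by_cases hc : ∀ j : Fin (n + 1), (i : ℕ) < (j : ℕ) → s j ≠ s i
          · simp only [if_pos hc]
            exact measurable_ecard_cluster G (s i)
          · simp only [if_neg hc]
            exact measurable_const)
    _ ≤ _ := by
        refine Finset.sum_le_sum fun i _ => ?_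
        by_cases hc : ∀ j : Fin (n + 1), (i : ℕ) < (j : ℕ) → s j ≠ s i
        · calc ∫⁻ ω, (if (∀ j : Fin (n + 1), (i : ℕ) < (j : ℕ) → s j ≠ s i)
                then ecard (cluster G ω (s i)) else 0) ∂μ
              = ∫⁻ ω, ecard (cluster G ω (s i)) ∂μ := lintegral_congr fun ω => if_pos hc
            _ ≤ ⨆ x : V, ∫⁻ ω, ecard (cluster G ω x) ∂μ :=
                le_iSup (fun x => ∫⁻ ω, ecard (cluster G ω x) ∂μ) (s i)
            _ = _ := by rw [pind_pos hc, one_mul]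
        · calc ∫⁻ ω, (if (∀ j : Fin (n + 1), (i : ℕ) < (j : ℕ) → s j ≠ s i)
                then ecard (cluster G ω (s i)) else 0) ∂μ
              = ∫⁻ ω, (0 : ℝ≥0∞) ∂μ := lintegral_congr fun ω => if_neg hc
            _ = 0 := by simp
            _ ≤ _ := zero_le

open Classical in
lemma integral_lower (G : SimpleGraph V) [G.LocallyFinite] [DecidableEq V] [Countable V]
    {p : ℝ≥0∞} {μ : Measure (Sym2 V → Bool)} (hμ : IsBernoulli G p μ)
    {Δ : ℕ} (hΔ : ∀ x : V, G.degree x ≤ Δ) {n : ℕ} (s : Fin (n + 1) → V) :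
    ∑ i : Fin (n + 1), (1 - p) ^ Δ *
        pind (∀ j : Fin (n + 1), (i : ℕ) < (j : ℕ) → s j ≠ s i)
      ≤ ∫⁻ ω, ecard (⋃ i, cluster G ω (s i)) ∂μ := by
  classical
  have hmeas : ∀ i : Fin (n + 1), Measurable (fun ω : Sym2 V → Bool =>
      (if (∀ j : Fin (n + 1), (i : ℕ) < (j : ℕ) → s j ∉ cluster G ω (s i))
        then ecard (cluster G ω (s i)) else 0 : ℝ≥0∞)) := by
    intro i
    have hset : MeasurableSet {ω : Sym2 V → Bool |
        ∀ j : Fin (n + 1), (i : ℕ) < (j : ℕ) → s j ∉ cluster G ω (s i)} := by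
      have he : {ω : Sym2 V → Bool |
          ∀ j : Fin (n + 1), (i : ℕ) < (j : ℕ) → s j ∉ cluster G ω (s i)}
          = ⋂ j : Fin (n + 1),
            {ω : Sym2 V → Bool | (i : ℕ) < (j : ℕ) → s j ∉ cluster G ω (s i)} := by
        ext ω
        simp [Set.mem_iInter]
      rw [he]
      refine MeasurableSet.iInter fun j => ?_
      by_cases hij : (i : ℕ) < (j : ℕ)
      · have he2 : {ω : Sym2 V → Bool | (i : ℕ) < (j : ℕ) → s j ∉ cluster G ω (s i)}
            = {ω : Sym2 V → Bool | (openGraph G ω).Reachable (s i) (s j)}ᶜ := by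
          ext ω
          simp [hij, mem_cluster_iff]
        rw [he2]
        exact (measurableSet_reachable G _ _).compl
      · have he2 : {ω : Sym2 V → Bool | (i : ℕ) < (j : ℕ) → s j ∉ cluster G ω (s i)}
            = Set.univ := by
          ext ω
          simp [hij]
        rw [he2]
        exact MeasurableSet.univ
    exact Measurable.ite hset (measurable_ecard_cluster G (s i)) measurable_const
  calc ∑ i : Fin (n + 1), (1 - p) ^ Δ *
        pind (∀ j : Fin (n + 1), (i : ℕ) < (j : ℕ) → s j ≠ s i)
      ≤ ∑ i : Fin (n + 1), ∫⁻ ω,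
          (if (∀ j : Fin (n + 1), (i : ℕ) < (j : ℕ) → s j ∉ cluster G ω (s i))
            then ecard (cluster G ω (s i)) else 0) ∂μ := by
        refine Finset.sum_le_sum fun i _ => ?_
        by_cases hdet : ∀ j : Fin (n + 1), (i : ℕ) < (j : ℕ) → s j ≠ s i
        · rw [pind_pos hdet, mul_one]
          have hptw : ∀ ω, (closedAt G (s i)).indicator (fun _ => (1 : ℝ≥0∞)) ω ≤
              (if (∀ j : Fin (n + 1), (i : ℕ) < (j : ℕ) → s j ∉ cluster G ω (s i))
                then ecard (cluster G ω (s i)) else 0) := by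
            intro ω
            rw [Set.indicator_apply]
            by_cases hω : ω ∈ closedAt G (s i)
            · rw [if_pos hω]
              have hcl := cluster_of_closedAt hω
              have hcond2 : ∀ j : Fin (n + 1), (i : ℕ) < (j : ℕ) →
                  s j ∉ cluster G ω (s i) := by
                intro j hj
                rw [hcl]
                simpa using hdet j hj
              rw [if_pos hcond2, hcl, ecard_singleton]
            · rw [if_neg hω]
              exact zero_le
          calc (1 - p) ^ Δ ≤ (1 - p) ^ (G.degree (s i)) :=
              pow_le_pow_of_le_one (zero_le) tsub_le_self (hΔ (s i))
            _ = μ (closedAt G (s i)) := (closedAt_prob G hμ (s i)).symm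
            _ = ∫⁻ ω, (closedAt G (s i)).indicator (fun _ => (1 : ℝ≥0∞)) ω ∂μ := by
                rw [lintegral_indicator_const (closedAt_measurable G (s i)) 1, one_mul]
            _ ≤ _ := lintegral_mono hptw
        · rw [pind_neg hdet, mul_zero]
          exact zero_le
    _ = ∫⁻ ω, ∑ i : Fin (n + 1),
          (if (∀ j : Fin (n + 1), (i : ℕ) < (j : ℕ) → s j ∉ cluster G ω (s i))
            then ecard (cluster G ω (s i)) else 0) ∂μ :=
        (lintegral_finset_sum _ (fun i _ => hmeas i)).symm
    _ ≤ _ := lintegral_mono fun ω => sum_lastexit_le G ω s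

end Aux4


/-- Proposition "Growth of mean": bounds on `E[U_n]`. -/
theorem statement_1 {V : Type*} [DecidableEq V] (G : SimpleGraph V) [G.LocallyFinite]
    (hV : Infinite V) (hconn : G.Connected)
    (Δ : ℕ) (hΔ : ∀ x : V, G.degree x ≤ Δ) (hΔ' : ∃ x : V, G.degree x = Δ)
    (p : ℝ≥0∞) (hp : p < 1)
    (μ : Measure (Sym2 V → Bool)) (hμ : IsBernoulli G p μ)
    (hsub : ∀ x : V, ∫⁻ ω, clusterSize G ω x ∂μ < ⊤)
    (y : V) (n : ℕ) (hn : 1 ≤ n) :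
    (1 - p) ^ Δ * ∑ i ∈ Finset.range (n + 1), ⨅ x : V, probAvoid G x {x} i
        ≤ expUnion G μ y n ∧
      expUnion G μ y n ≤
        (⨆ x : V, ∫⁻ ω, clusterSize G ω x ∂μ) *
          ∑ i ∈ Finset.range (n + 1), ⨆ x : V, probAvoid G x {x} i := by
  classical
  have hcount : Countable V := countable_of_connected G hconn
  have hdeg : ∀ x : V, 0 < G.degree x := degree_pos G hV hconn
  have hexp : expUnion G μ y n
      = ∑' s : Fin (n + 1) → V, pathProb G y s *
          ∫⁻ ω, ecard (⋃ i, cluster G ω (s i)) ∂μ := by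
    rw [expUnion]
    exact tsum_congr fun s => by
      rw [lintegral_congr (fun ω => ecard_eq (⋃ i, cluster G ω (s i)))]
  have hA : ∀ i : Fin (n + 1),
      ∑' s : Fin (n + 1) → V, pathProb G y s *
          pind (∀ j : Fin (n + 1), (i : ℕ) < (j : ℕ) → s j ≠ s i)
        = ∑' a : Fin ((i : ℕ) + 1) → V, pathProb G y a *
            probAvoid G (a (Fin.last (i : ℕ))) {a (Fin.last (i : ℕ))} (n - (i : ℕ)) := by
    intro i
    have h := key_eq G y n (i : ℕ) (by omega)
    simpa only [Fin.eta] using h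
  have hAlow : ∀ i : Fin (n + 1),
      (⨅ x : V, probAvoid G x {x} (n - (i : ℕ)))
        ≤ ∑' s : Fin (n + 1) → V, pathProb G y s *
            pind (∀ j : Fin (n + 1), (i : ℕ) < (j : ℕ) → s j ≠ s i) := by
    intro i
    rw [hA i]
    calc (⨅ x : V, probAvoid G x {x} (n - (i : ℕ)))
        = ∑' a : Fin ((i : ℕ) + 1) → V, pathProb G y a *
            (⨅ x : V, probAvoid G x {x} (n - (i : ℕ))) := by
          rw [ENNReal.tsum_mul_right, tsum_pathProb G hdeg y (i : ℕ), one_mul]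
      _ ≤ _ := Summable.tsum_le_tsum
          (fun a => mul_le_mul_right (iInf_le _ (a (Fin.last (i : ℕ)))) _)
          ENNReal.summable ENNReal.summable
  have hAup : ∀ i : Fin (n + 1),
      (∑' s : Fin (n + 1) → V, pathProb G y s *
          pind (∀ j : Fin (n + 1), (i : ℕ) < (j : ℕ) → s j ≠ s i))
        ≤ ⨆ x : V, probAvoid G x {x} (n - (i : ℕ)) := by
    intro i
    rw [hA i]
    calc ∑' a : Fin ((i : ℕ) + 1) → V, pathProb G y a *
            probAvoid G (a (Fin.last (i : ℕ))) {a (Fin.last (i : ℕ))} (n - (i : ℕ))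
        ≤ ∑' a : Fin ((i : ℕ) + 1) → V, pathProb G y a *
            (⨆ x : V, probAvoid G x {x} (n - (i : ℕ))) := Summable.tsum_le_tsum
          (fun a => mul_le_mul_right
            (le_iSup (fun x => probAvoid G x {x} (n - (i : ℕ))) (a (Fin.last (i : ℕ)))) _)
          ENNReal.summable ENNReal.summable
      _ = _ := by rw [ENNReal.tsum_mul_right, tsum_pathProb G hdeg y (i : ℕ), one_mul]
  have hswap : ∀ c : ℝ≥0∞,
      ∑' s : Fin (n + 1) → V, pathProb G y s *
          (∑ i : Fin (n + 1), c *
            pind (∀ j : Fin (n + 1), (i : ℕ) < (j : ℕ) → s j ≠ s i))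
        = ∑ i : Fin (n + 1), c *
            (∑' s : Fin (n + 1) → V, pathProb G y s *
              pind (∀ j : Fin (n + 1), (i : ℕ) < (j : ℕ) → s j ≠ s i)) := by
    intro c
    calc ∑' s : Fin (n + 1) → V, pathProb G y s *
          (∑ i : Fin (n + 1), c *
            pind (∀ j : Fin (n + 1), (i : ℕ) < (j : ℕ) → s j ≠ s i))
        = ∑' s : Fin (n + 1) → V, ∑ i : Fin (n + 1), c * (pathProb G y s *
            pind (∀ j : Fin (n + 1), (i : ℕ) < (j : ℕ) → s j ≠ s i)) := by
          refine tsum_congr fun s => ?_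
          rw [Finset.mul_sum]
          exact Finset.sum_congr rfl fun i _ => by ring
      _ = ∑ i : Fin (n + 1), ∑' s : Fin (n + 1) → V, c * (pathProb G y s *
            pind (∀ j : Fin (n + 1), (i : ℕ) < (j : ℕ) → s j ≠ s i)) :=
          Summable.tsum_finsetSum (fun i _ => ENNReal.summable)
      _ = _ := Finset.sum_congr rfl fun i _ => ENNReal.tsum_mul_left
  have hreindex : ∀ v : ℕ → ℝ≥0∞,
      ∑ i : Fin (n + 1), v (n - (i : ℕ)) = ∑ k ∈ Finset.range (n + 1), v k := by
    intro v
    rw [Fin.sum_univ_eq_sum_range (fun k => v (n - k)) (n + 1)]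
    have h := Finset.sum_range_reflect v (n + 1)
    simpa using h
  constructor
  · rw [hexp]
    calc (1 - p) ^ Δ * ∑ i ∈ Finset.range (n + 1), ⨅ x : V, probAvoid G x {x} i
        = ∑ i : Fin (n + 1), (1 - p) ^ Δ *
            (⨅ x : V, probAvoid G x {x} (n - (i : ℕ))) := by
          rw [← hreindex (fun k => ⨅ x : V, probAvoid G x {x} k), Finset.mul_sum]
      _ ≤ ∑ i : Fin (n + 1), (1 - p) ^ Δ *
            (∑' s : Fin (n + 1) → V, pathProb G y s *
              pind (∀ j : Fin (n + 1), (i : ℕ) < (j : ℕ) → s j ≠ s i)) :=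
          Finset.sum_le_sum fun i _ => mul_le_mul_right (hAlow i) _
      _ = ∑' s : Fin (n + 1) → V, pathProb G y s *
            (∑ i : Fin (n + 1), (1 - p) ^ Δ *
              pind (∀ j : Fin (n + 1), (i : ℕ) < (j : ℕ) → s j ≠ s i)) :=
          (hswap ((1 - p) ^ Δ)).symm
      _ ≤ ∑' s : Fin (n + 1) → V, pathProb G y s *
            ∫⁻ ω, ecard (⋃ i, cluster G ω (s i)) ∂μ := Summable.tsum_le_tsum
          (fun s => mul_le_mul_right (integral_lower G hμ hΔ s) _)
          ENNReal.summable ENNReal.summable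
  · rw [hexp]
    have hM : (⨆ x : V, ∫⁻ ω, ecard (cluster G ω x) ∂μ)
        = ⨆ x : V, ∫⁻ ω, clusterSize G ω x ∂μ := by
      refine iSup_congr fun x => ?_
      refine lintegral_congr fun ω => ?_
      rw [clusterSize, ecard_eq]
    calc ∑' s : Fin (n + 1) → V, pathProb G y s *
          ∫⁻ ω, ecard (⋃ i, cluster G ω (s i)) ∂μ
        ≤ ∑' s : Fin (n + 1) → V, pathProb G y s *
            (∑ i : Fin (n + 1),
              (⨆ x : V, ∫⁻ ω, ecard (cluster G ω x) ∂μ) *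
              pind (∀ j : Fin (n + 1), (i : ℕ) < (j : ℕ) → s j ≠ s i)) := by
          refine Summable.tsum_le_tsum (fun s => mul_le_mul_right ?_ _)
            ENNReal.summable ENNReal.summable
          refine (integral_upper G μ s).trans_eq ?_
          exact Finset.sum_congr rfl fun i _ => mul_comm _ _
      _ = ∑ i : Fin (n + 1), (⨆ x : V, ∫⁻ ω, ecard (cluster G ω x) ∂μ) *
            (∑' s : Fin (n + 1) → V, pathProb G y s *
              pind (∀ j : Fin (n + 1), (i : ℕ) < (j : ℕ) → s j ≠ s i)) :=
          hswap _
      _ ≤ ∑ i : Fin (n + 1), (⨆ x : V, ∫⁻ ω, ecard (cluster G ω x) ∂μ) *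
            (⨆ x : V, probAvoid G x {x} (n - (i : ℕ))) :=
          Finset.sum_le_sum fun i _ => mul_le_mul_right (hAup i) _
      _ = (⨆ x : V, ∫⁻ ω, clusterSize G ω x ∂μ) *
            ∑ i ∈ Finset.range (n + 1), ⨆ x : V, probAvoid G x {x} i := by
          rw [← Finset.mul_sum, hreindex (fun k => ⨆ x : V, probAvoid G x {x} k), hM]


end PaperUnion
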